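/- Let ρ : (0,1] → ℝ be a nonnegative measurable function such that r ↦ r⁴ρ(r) is integrable on (0,1) and satisfies the second-moment normalization ∫₀¹ r⁴ρ(r) dr = 3/(2π). Then for every δ > 0 and every k ∈ ℤ³ \ {0}, the 3D nonlocal Fourier symbol satisfies the lower bound λ_δ(k) ≥ |k|² − (δ² |k|⁴)/20. -/

import Mathlib

open Real MeasureTheory

lemma my_sin_ge (x : ℝ) (hx : 0 ≤ x) : x - x ^ 3 / 6 ≤ Real.sin x := by
  have mono : MonotoneOn (fun t : ℝ => Real.sin t - t + t ^ 3 / 6) (Set.Ici 0) := by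
    have hd : ∀ y : ℝ, HasDerivAt (fun t : ℝ => Real.sin t - t + t ^ 3 / 6)
        (Real.cos y - 1 + y ^ 2 / 2) y := by
      intro y
      have h1 := ((Real.hasDerivAt_sin y).sub (hasDerivAt_id y)).add
        (((hasDerivAt_pow 3 y)).div_const 6)
      refine h1.congr_deriv ?_
      simp; ring
    apply monotoneOn_of_deriv_nonneg (convex_Ici 0)
    · exact (Continuous.continuousOn (by continuity))
    · intro y _
      exact (hd y).differentiableAt.differentiableWithinAt
    · intro y hy
      rw [(hd y).deriv]
      nlinarith [Real.one_sub_sq_div_two_le_cos (x := y)]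
  have h0 := mono (Set.self_mem_Ici) hx hx
  simp at h0
  linarith

lemma my_one_sub_cos_ge (x : ℝ) : x ^ 2 / 2 - x ^ 4 / 24 ≤ 1 - Real.cos x := by
  wlog hx : 0 ≤ x with H
  · have := H (-x) (by linarith [le_of_not_ge hx])
    have h4 : (-x) ^ 4 = x ^ 4 := by ring
    have h2 : (-x) ^ 2 = x ^ 2 := by ring
    rw [h4, h2, Real.cos_neg] at this
    exact this
  set y := x / 2 with hy
  have hy0 : 0 ≤ y := by positivity
  have hsin : Real.sin y ^ 2 ≥ y ^ 2 - y ^ 4 / 3 := by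
    rcases le_or_gt (y ^ 2) 3 with h3 | h3
    · have hs := my_sin_ge y hy0
      have hpos : 0 ≤ y - y ^ 3 / 6 := by nlinarith
      nlinarith [pow_le_pow_left₀ hpos hs 2, pow_nonneg hy0 6]
    · nlinarith [sq_nonneg (Real.sin y)]
  have hcos : Real.sin y ^ 2 = 1 / 2 - Real.cos x / 2 := by
    have h := Real.sin_sq_eq_half_sub (x / 2)
    have h2 : 2 * (x / 2) = x := by ring
    rw [h2] at h
    simpa [hy] using h
  rw [hcos, hy] at hsin
  nlinarith [hsin]



/-- Euclidean norm of a nonzero integer vector `k ∈ ℤ³`. -/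
noncomputable def knorm3 (k : ℤ × ℤ × ℤ) : ℝ :=
  Real.sqrt ((k.1 : ℝ) ^ 2 + (k.2.1 : ℝ) ^ 2 + (k.2.2 : ℝ) ^ 2)

/-- The 3D Fourier symbol of the nonlocal diffusion operator:
`λ_δ(k) = (4π/δ²) ∫₀^{π/2} sin θ ∫₀¹ r² ρ(r) (1 − cos(r δ |k| cos θ)) dr dθ`. -/
noncomputable def lambdaDelta3 (ρ : ℝ → ℝ) (δ κ : ℝ) : ℝ :=
  (4 * π / δ ^ 2) * ∫ θ in (0:ℝ)..(π / 2), Real.sin θ *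
    ∫ r in (0:ℝ)..1, r ^ 2 * ρ r * (1 - Real.cos (r * δ * κ * Real.cos θ))

theorem lambdaDelta3_lower_bound (ρ : ℝ → ℝ) (hmeas : Measurable ρ)
    (hnonneg : ∀ r ∈ Set.Ioc (0:ℝ) 1, 0 ≤ ρ r)
    (hint : IntervalIntegrable (fun r => r ^ 4 * ρ r) volume 0 1)
    (hmoment : (∫ r in (0:ℝ)..1, r ^ 4 * ρ r) = 3 / (2 * π))
    (δ : ℝ) (hδ : 0 < δ) (k : ℤ × ℤ × ℤ) (hk : k ≠ 0) :
    (knorm3 k) ^ 2 - δ ^ 2 * (knorm3 k) ^ 4 / 20 ≤ lambdaDelta3 ρ δ (knorm3 k) := by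
  have hπ : 0 < π := Real.pi_pos
  set κ := knorm3 k with hκdef
  have hκ0 : 0 ≤ κ := Real.sqrt_nonneg _
  set M : ℝ := 3 / (2 * π) with hM
  -- measurability of the inner integrand
  have hFmeas : ∀ c : ℝ, Measurable (fun r : ℝ => r ^ 2 * ρ r * (1 - Real.cos (r * δ * κ * c))) := by
    intro c
    exact ((measurable_id.pow_const 2).mul hmeas).mul
      ((continuous_const.sub (Real.continuous_cos.comp
        (((continuous_id.mul continuous_const).mul continuous_const).mul continuous_const))).measurable)
  -- interval integrability of the inner integrand
  have hIntF : ∀ c : ℝ, IntervalIntegrable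
      (fun r : ℝ => r ^ 2 * ρ r * (1 - Real.cos (r * δ * κ * c))) volume 0 1 := by
    intro c
    apply (hint.const_mul ((δ * κ * c) ^ 2 / 2)).mono_fun
      ((hFmeas c).aestronglyMeasurable)
    rw [Set.uIoc_of_le (by norm_num : (0:ℝ) ≤ 1)]
    filter_upwards [MeasureTheory.ae_restrict_mem measurableSet_Ioc] with r hr
    have hρ := hnonneg r hr
    have hc1 := my_one_sub_cos_ge (r * δ * κ * c)
    have hc2 : Real.cos (r * δ * κ * c) ≤ 1 := Real.cos_le_one _
    have hc3 : 1 - Real.cos (r * δ * κ * c) ≤ (r * δ * κ * c) ^ 2 / 2 := by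
      nlinarith [Real.one_sub_sq_div_two_le_cos (x := r * δ * κ * c)]
    have h0f : 0 ≤ r ^ 2 * ρ r * (1 - Real.cos (r * δ * κ * c)) := by
      apply mul_nonneg (mul_nonneg (by positivity) hρ); linarith
    rw [Real.norm_eq_abs, Real.norm_eq_abs, abs_of_nonneg h0f]
    refine le_trans ?_ (le_abs_self _)
    have := mul_le_mul_of_nonneg_left hc3 (mul_nonneg (sq_nonneg r) hρ)
    nlinarith [mul_nonneg (mul_nonneg (sq_nonneg r) hρ) (sq_nonneg (δ * κ * c)),
      mul_nonneg hρ (sq_nonneg (r * δ * κ * c)), hr.1.le, hr.2,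
      mul_le_mul_of_nonneg_left hc3 (mul_nonneg (sq_nonneg r) hρ)]
  -- lower bound for the inner integral
  have inner_ge : ∀ c : ℝ, ((δ * κ * c) ^ 2 / 2 - (δ * κ * c) ^ 4 / 24) * M ≤
      ∫ r in (0:ℝ)..1, r ^ 2 * ρ r * (1 - Real.cos (r * δ * κ * c)) := by
    intro c
    rw [← hmoment, ← intervalIntegral.integral_const_mul]
    apply intervalIntegral.integral_mono_on (by norm_num : (0:ℝ) ≤ 1)
      (hint.const_mul _) (hIntF c)
    intro r hr
    rcases eq_or_lt_of_le hr.1 with h0 | h0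
    · simp [← h0]
    have hρ := hnonneg r ⟨h0, hr.2⟩
    have hc1 := my_one_sub_cos_ge (r * δ * κ * c)
    have key := mul_le_mul_of_nonneg_left hc1 (mul_nonneg (sq_nonneg r) hρ)
    have hr6 : r ^ 6 ≤ r ^ 4 := pow_le_pow_of_le_one h0.le hr.2 (by norm_num)
    have hpos : 0 ≤ ρ r * (δ * κ * c) ^ 4 * (r ^ 4 - r ^ 6) := by
      apply mul_nonneg (mul_nonneg hρ (by positivity)); linarith
    nlinarith [key, hpos]
  -- continuity of the inner integral as a function of θ
  have hIcont : Continuous fun θ : ℝ =>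
      ∫ r in Set.Ioc (0:ℝ) 1, r ^ 2 * ρ r * (1 - Real.cos (r * δ * κ * Real.cos θ)) := by
    apply MeasureTheory.continuous_of_dominated
      (bound := fun r => (δ * κ) ^ 2 / 2 * (r ^ 4 * ρ r))
    · intro θ
      exact (hFmeas (Real.cos θ)).aestronglyMeasurable
    · intro θ
      filter_upwards [MeasureTheory.ae_restrict_mem measurableSet_Ioc] with r hr
      have hρ := hnonneg r hr
      have hc2 : Real.cos (r * δ * κ * Real.cos θ) ≤ 1 := Real.cos_le_one _
      have hc3 : 1 - Real.cos (r * δ * κ * Real.cos θ) ≤ (r * δ * κ * Real.cos θ) ^ 2 / 2 := by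
        nlinarith [Real.one_sub_sq_div_two_le_cos (x := r * δ * κ * Real.cos θ)]
      have h0f : 0 ≤ r ^ 2 * ρ r * (1 - Real.cos (r * δ * κ * Real.cos θ)) := by
        apply mul_nonneg (mul_nonneg (by positivity) hρ); linarith
      rw [Real.norm_eq_abs, abs_of_nonneg h0f]
      have hcs : Real.cos θ ^ 2 ≤ 1 := Real.cos_sq_le_one θ
      nlinarith [mul_le_mul_of_nonneg_left hc3 (mul_nonneg (sq_nonneg r) hρ),
        mul_nonneg (mul_nonneg (mul_nonneg hρ (sq_nonneg r)) (sq_nonneg (r * δ * κ)))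
          (sub_nonneg.mpr hcs), hr.1.le, hr.2,
        mul_nonneg (mul_nonneg hρ (sq_nonneg (δ * κ))) (sq_nonneg r), sq_nonneg (δ * κ)]
    · exact (intervalIntegrable_iff_integrableOn_Ioc_of_le (by norm_num : (0:ℝ) ≤ 1)).mp
        (hint.const_mul _)
    · filter_upwards with r
      fun_prop
  -- rewrite inner interval integrals as set integrals
  have hinner_eq : ∀ θ : ℝ, (∫ r in (0:ℝ)..1, r ^ 2 * ρ r * (1 - Real.cos (r * δ * κ * Real.cos θ)))
      = ∫ r in Set.Ioc (0:ℝ) 1, r ^ 2 * ρ r * (1 - Real.cos (r * δ * κ * Real.cos θ)) :=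
    fun θ => intervalIntegral.integral_of_le (by norm_num)
  set b : ℝ := δ * κ with hb
  set g : ℝ → ℝ := fun θ => Real.sin θ * (((b * Real.cos θ) ^ 2 / 2 - (b * Real.cos θ) ^ 4 / 24) * M)
    with hg
  have hgcont : Continuous g := by fun_prop
  -- the outer integrand dominates g on [0, π/2]
  have houter_ge : ∫ θ in (0:ℝ)..(π/2), g θ ≤ ∫ θ in (0:ℝ)..(π/2), Real.sin θ *
      ∫ r in Set.Ioc (0:ℝ) 1, r ^ 2 * ρ r * (1 - Real.cos (r * δ * κ * Real.cos θ)) := by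
    apply intervalIntegral.integral_mono_on (by positivity)
      (hgcont.intervalIntegrable 0 (π/2))
      ((Real.continuous_sin.mul hIcont).intervalIntegrable 0 (π/2))
    intro θ hθ
    have hsθ : 0 ≤ Real.sin θ := Real.sin_nonneg_of_nonneg_of_le_pi hθ.1 (by linarith [hθ.2])
    have := inner_ge (Real.cos θ)
    rw [hinner_eq θ] at this
    simpa [hg] using mul_le_mul_of_nonneg_left this hsθ
  -- exact value of ∫ g
  have hval : ∫ θ in (0:ℝ)..(π/2), g θ = M * (b ^ 2 / 6 - b ^ 4 / 120) := by
    have hderiv : ∀ θ ∈ Set.uIcc (0:ℝ) (π/2), HasDerivAt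
        (fun t => M * (-(b ^ 2) * Real.cos t ^ 3 / 6 + b ^ 4 * Real.cos t ^ 5 / 120)) (g θ) θ := by
      intro θ _
      have h3 := (Real.hasDerivAt_cos θ).pow 3
      have h5 := (Real.hasDerivAt_cos θ).pow 5
      have := (((h3.const_mul (-(b ^ 2))).div_const 6).add
        ((h5.const_mul (b ^ 4)).div_const 120)).const_mul M
      refine this.congr_deriv ?_
      rw [hg]
      simp
      ring
    rw [intervalIntegral.integral_eq_sub_of_hasDerivAt hderiv
      (hgcont.intervalIntegrable 0 (π/2))]
    simp [Real.cos_pi_div_two]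
    ring
  -- final assembly
  rw [lambdaDelta3]
  have hrw : (∫ θ in (0:ℝ)..(π/2), Real.sin θ *
        ∫ r in (0:ℝ)..1, r ^ 2 * ρ r * (1 - Real.cos (r * δ * κ * Real.cos θ)))
      = ∫ θ in (0:ℝ)..(π/2), Real.sin θ *
        ∫ r in Set.Ioc (0:ℝ) 1, r ^ 2 * ρ r * (1 - Real.cos (r * δ * κ * Real.cos θ)) := by
    apply intervalIntegral.integral_congr
    intro θ _
    simp only [hinner_eq]
  rw [hrw]
  have hfinal : (4 * π / δ ^ 2) * (M * (b ^ 2 / 6 - b ^ 4 / 120)) = κ ^ 2 - δ ^ 2 * κ ^ 4 / 20 := by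
    rw [hM, hb]
    field_simp
    ring
  calc κ ^ 2 - δ ^ 2 * κ ^ 4 / 20 = (4 * π / δ ^ 2) * (M * (b ^ 2 / 6 - b ^ 4 / 120)) :=
        hfinal.symm
    _ = (4 * π / δ ^ 2) * ∫ θ in (0:ℝ)..(π/2), g θ := by rw [hval]
    _ ≤ _ := by
        apply mul_le_mul_of_nonneg_left houter_ge (by positivity)
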